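/- Let X be a uniform space and E an entourage of X. Suppose x₀,…,x_k is an E-chain, y₀,…,y_m,x_k and y₀,…,y_m,y are E-chains, and (x_k, y) ∈ E. Then the concatenated E-chain x₀,…,x_k, y_m, y_{m-1},…,y₁, y₀, y₁,…,y_m, y (the first chain, followed by the reverse of the second, followed by the third) is E-homotopic with fixed endpoints to the E-chain x₀,…,x_k, y. -/

import Mathlib

/-- A list `x₀, …, xₙ` of points of `X` is an `E`-chain if each consecutive pair of
points `(xᵢ, xᵢ₊₁)` lies in `E`. -/
def IsEChain {X : Type*} (E : Set (X × X)) (l : List X) : Prop :=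
  l.Chain' fun a b => (a, b) ∈ E

/-- A single move of an `E`-homotopy: insert one point into an `E`-chain (equivalently,
read backwards, delete one point), in such a way that the result is still an `E`-chain
and the endpoints (the first and the last point) are unchanged. -/
def EChainStep {X : Type*} (E : Set (X × X)) (l l' : List X) : Prop :=
  (∃ l₁ x l₂, l = l₁ ++ l₂ ∧ l' = l₁ ++ x :: l₂) ∧
    IsEChain E l ∧ IsEChain E l' ∧ l.head? = l'.head? ∧ l.getLast? = l'.getLast?

/-- Two `E`-chains are `E`-homotopic (with fixed endpoints) if one can be obtained from
the other by a finite sequence of single-point insertions/deletions preserving the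
endpoints; i.e. `EHomotopic E` is the equivalence relation generated by `EChainStep E`. -/
def EHomotopic {X : Type*} (E : Set (X × X)) : List X → List X → Prop :=
  Relation.EqvGen (EChainStep E)

/-- Let `a = x₀, …, x_k` be an `E`-chain, let `ys = y₀, …, y_m` be such that
`y₀, …, y_m, x_k` and `y₀, …, y_m, y` are `E`-chains, and suppose `(x_k, y) ∈ E`.
Then the concatenated chain `x₀, …, x_k, y_m, …, y₁, y₀, y₁, …, y_m, y`
is `E`-homotopic with fixed endpoints to the chain `x₀, …, x_k, y`. -/
lemma step_del {X : Type*} {E : Set (X × X)} (l₁ l₂ : List X) (x : X)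
    (h₁ : l₁ ≠ []) (h₂ : l₂ ≠ [])
    (hc : IsEChain E (l₁ ++ x :: l₂))
    (hjoin : ∀ p ∈ l₁.getLast?, ∀ q ∈ l₂.head?, (p, q) ∈ E) :
    EChainStep E (l₁ ++ l₂) (l₁ ++ x :: l₂) := by
  obtain ⟨c1, c2, _⟩ := List.isChain_append.mp hc
  refine ⟨⟨l₁, x, l₂, rfl, rfl⟩, ?_, hc, ?_, ?_⟩
  · exact List.isChain_append.mpr ⟨c1, c2.tail, hjoin⟩
  · obtain ⟨p, t, rfl⟩ := List.exists_cons_of_ne_nil h₁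
    simp
  · obtain ⟨p, t, rfl⟩ := List.exists_cons_of_ne_nil h₂
    simp [List.getLast?_append]

lemma aux_back {X : Type*} {E : Set (X × X)} (hrefl : ∀ x : X, (x, x) ∈ E)
    (hsymm : ∀ x y : X, (x, y) ∈ E → (y, x) ∈ E) :
    ∀ (ys : List X), ys ≠ [] → ∀ (a : List X) (ha : a ≠ []) (y : X),
      IsEChain E a → IsEChain E (ys ++ [a.getLast ha]) →
      IsEChain E (ys ++ [y]) → (a.getLast ha, y) ∈ E →
      EHomotopic E (a ++ ys.reverse ++ ys.tail ++ [y]) (a ++ [y]) := by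
  intro ys
  induction ys with
  | nil => intro h; exact absurd rfl h
  | cons y₀ ys' ih =>
    intro _ a ha y hachain hγ hω hxy
    have hk : a.getLast? = some (a.getLast ha) := List.getLast?_eq_getLast ha
    match ys' with
    | [] =>
      -- goal: a ++ [y₀].reverse ++ [].tail? ...
      simp only [List.reverse_cons, List.reverse_nil, List.nil_append, List.tail_cons,
        List.append_nil, List.append_assoc, List.singleton_append]
      refine Relation.EqvGen.symm _ _ (Relation.EqvGen.rel _ _
        (step_del a [y] y₀ ha (by simp) ?_ ?_))
      · -- IsEChain E (a ++ y₀ :: [y])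
        refine List.isChain_append.mpr ⟨hachain, ?_, ?_⟩
        · simp only [IsEChain, List.singleton_append] at hω
          exact hω
        · simp only [hk, List.head?_cons, Option.mem_some_iff]
          rintro p rfl q rfl
          have := List.isChain_append.mp hγ
          have h1 : (y₀, a.getLast ha) ∈ E := by
            have := this.2.2
            simp at this
            exact this
          exact hsymm _ _ h1
      · simp only [hk, List.head?_cons, Option.mem_some_iff]
        rintro p rfl q rfl
        exact hxy
    | y₁ :: t =>
      -- names
      have hne : (y₁ :: t : List X) ≠ [] := by simp
      -- chain facts
      have hω' : IsEChain E (y₀ :: ((y₁ :: t) ++ [y])) := hω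
      have hγtail : IsEChain E ((y₁ :: t) ++ [a.getLast ha]) := List.IsChain.tail hγ
      have hωtail : IsEChain E ((y₁ :: t) ++ [y]) := List.IsChain.tail hω
      have hy01 : (y₀, y₁) ∈ E := by
        have := (List.isChain_cons_cons.mp hω').1
        simpa using this
      have hchain_yt : IsEChain E (y₁ :: t) := (List.isChain_append.mp hγtail).1
      have hrev : IsEChain E ((y₁ :: t).reverse) := by
        rw [IsEChain, List.Chain', List.isChain_reverse]
        exact hchain_yt.imp (fun a b h => hsymm _ _ h)
      -- last of a ++ reverse
      have hlastar : (a ++ (y₁ :: t).reverse).getLast? = some y₁ := by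
        simp [List.getLast?_append]
      -- chain of big path P
      have hP : IsEChain E ((a ++ (y₁ :: t).reverse) ++ y₀ :: ((y₁ :: t) ++ [y])) := by
        refine List.isChain_append.mpr ⟨?_, hω', ?_⟩
        · refine List.isChain_append.mpr ⟨hachain, hrev, ?_⟩
          simp only [hk, Option.mem_some_iff, List.head?_reverse]
          rintro p rfl
          have hj := (List.isChain_append.mp hγ).2.2
          simp only [List.head?_cons, Option.mem_some_iff, List.getLast?_cons_cons] at hj ⊢
          intro q hq
          exact hsymm _ _ (hj q hq _ rfl)
        · simp only [hlastar, Option.mem_some_iff, List.head?_cons]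
          rintro p rfl q rfl
          exact hsymm _ _ hy01
      -- step 1 : delete y₀
      have hstep1 := step_del (a ++ (y₁ :: t).reverse) ((y₁ :: t) ++ [y]) y₀
        (by simp [ha]) (by simp) hP
        (by
          simp only [hlastar, Option.mem_some_iff, List.cons_append, List.head?_cons]
          rintro p rfl q rfl
          exact hrefl y₁)
      -- step 2 : delete y₁ (head of the second copy)
      have hQ : IsEChain E ((a ++ (y₁ :: t).reverse) ++ y₁ :: (t ++ [y])) := hstep1.2.1
      have hstep2 := step_del (a ++ (y₁ :: t).reverse) (t ++ [y]) y₁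
        (by simp [ha]) (by simp) hQ
        (by
          simp only [hlastar, Option.mem_some_iff]
          rintro p rfl
          have := List.isChain_cons.mp (List.isChain_cons_cons.mp hω').2
          intro q hq
          exact this.1 q hq)
      -- induction hypothesis
      have hIH := ih hne a ha y hachain hγtail hωtail hxy
      -- assemble
      have h1 : EHomotopic E (a ++ (y₁ :: t).reverse ++ y₀ :: (y₁ :: t ++ [y]))
          (a ++ (y₁ :: t).reverse ++ (y₁ :: t ++ [y])) :=
        Relation.EqvGen.symm _ _ (Relation.EqvGen.rel _ _ hstep1)
      have h2 : EHomotopic E (a ++ (y₁ :: t).reverse ++ y₁ :: (t ++ [y]))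
          (a ++ (y₁ :: t).reverse ++ (t ++ [y])) :=
        Relation.EqvGen.symm _ _ (Relation.EqvGen.rel _ _ hstep2)
      have h2' := Relation.EqvGen.symm _ _ h2
      simp only [List.reverse_cons, List.tail_cons, List.append_assoc, List.cons_append,
        List.singleton_append, List.nil_append] at hIH h1 h2 ⊢
      exact Relation.EqvGen.trans _ _ _ h1 (Relation.EqvGen.trans _ _ _ h2 hIH)

theorem concat_backtrack_homotopic_append {X : Type*} [UniformSpace X]
    {E : Set (X × X)} (hE : E ∈ uniformity X)
    (hsymm : ∀ x y : X, (x, y) ∈ E → (y, x) ∈ E)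
    (a ys : List X) (ha : a ≠ []) (hys : ys ≠ [])
    (hachain : IsEChain E a)
    (hγ : IsEChain E (ys ++ [a.getLast ha]))
    (y : X) (hω : IsEChain E (ys ++ [y]))
    (hxy : (a.getLast ha, y) ∈ E) :
    EHomotopic E (a ++ ys.reverse ++ ys.tail ++ [y]) (a ++ [y]) := by
  exact aux_back (fun x => refl_mem_uniformity hE) hsymm ys hys a ha y hachain hγ hω hxy
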